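/- The rational function c₊ transforms under a simple reflection s_i (1 ≤ i ≤ n) by (s_i c₊)(x) = c₊(x)·c_{-a_i}(-x)/c_{a_i}(-x), where c_{a_i} is the local c-function attached to the simple root a_i. -/

import Mathlib

noncomputable section

/-- c₊(x) = ∏_{j<k} ((t−x_j+x_k)(t−x_j−x_k))/((x_k+x_j)(x_k−x_j)) ∏_j ((a−x_j)(b−x_j))/(−2x_j). -/
def cplus (n : ℕ) (a b t : ℂ) (x : Fin n → ℂ) : ℂ :=
  (∏ j, ∏ k ∈ Finset.Ioi j,
      ((t - x j + x k) * (t - x j - x k)) / ((x k + x j) * (x k - x j))) *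
    ∏ j, ((a - x j) * (b - x j)) / (-2 * x j)

lemma prod_Ioi_filter (n : ℕ) (f : Fin n → Fin n → ℂ) :
    ∏ j, ∏ k ∈ Finset.Ioi j, f j k
      = ∏ p ∈ Finset.univ.filter (fun p : Fin n × Fin n => p.1 < p.2), f p.1 p.2 := by
  rw [Finset.prod_sigma']
  apply Finset.prod_nbij (fun p => (p.1, p.2))
  · rintro ⟨a, b⟩ h
    simp_all [Finset.mem_sigma]
  · rintro ⟨a, b⟩ h ⟨c, d⟩ h2 heq
    simp_all
  · rintro ⟨a, b⟩ h
    simp_all [Finset.mem_sigma]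
  · intros; rfl

lemma swap_filter_map (n : ℕ) (i j : Fin n) (hij : (i : ℕ) + 1 = (j : ℕ)) :
    (Finset.univ.filter (fun p : Fin n × Fin n => p.1 < p.2)).map
        ((Equiv.prodCongr (Equiv.swap i j) (Equiv.swap i j)).toEmbedding)
      = insert ((j, i))
          ((Finset.univ.filter (fun p : Fin n × Fin n => p.1 < p.2)).erase (i, j)) := by
  ext ⟨c, d⟩
  rw [Finset.mem_map_equiv]
  simp only [Equiv.prodCongr_symm, Equiv.symm_swap, Equiv.prodCongr_apply, Prod.map,
    Finset.mem_filter, Finset.mem_univ, true_and, Finset.mem_insert, Finset.mem_erase,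
    Prod.mk.injEq, Equiv.swap_apply_def, Fin.lt_def, ne_eq, Prod.ext_iff, Fin.ext_iff]
  split_ifs <;> simp_all <;> omega

/-- (s_i c₊)(x) = c₊(x) · c_{-a_i}(-x)/c_{a_i}(-x): for middle simple roots
(s_i swapping x_i, x_{i+1}, c_{a_i}(x) = (t + x_i − x_{i+1})/(x_i − x_{i+1})) and for the
last simple root (sₙ negating xₙ, c_{aₙ}(x) = (a + xₙ)(b + xₙ)/(2xₙ)); here c_{-α}(x) = c_α(−x). -/
theorem stmt14 (n : ℕ) (hn : 0 < n) (a b t : ℂ) (x : Fin n → ℂ)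
    (hx0 : ∀ j, x j ≠ 0) (hx1 : ∀ j k : Fin n, j ≠ k → (x j) ^ 2 ≠ (x k) ^ 2) :
    (∀ i j : Fin n, (i : ℕ) + 1 = (j : ℕ) → (t - x i + x j ≠ 0) →
      cplus n a b t (x ∘ Equiv.swap i j)
        = cplus n a b t x * ((t + x i - x j) / (x i - x j))
            / ((t - x i + x j) / (x j - x i))) ∧
    ((a - x ⟨n - 1, by omega⟩) * (b - x ⟨n - 1, by omega⟩) ≠ 0 →
      cplus n a b t (Function.update x ⟨n - 1, by omega⟩ (-(x ⟨n - 1, by omega⟩)))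
        = cplus n a b t x
            * ((a + x ⟨n - 1, by omega⟩) * (b + x ⟨n - 1, by omega⟩) / (2 * x ⟨n - 1, by omega⟩))
            / ((a - x ⟨n - 1, by omega⟩) * (b - x ⟨n - 1, by omega⟩)
                / (-2 * x ⟨n - 1, by omega⟩))) := by
  constructor
  · -- middle simple roots
    intro i j hij ht
    have hne : i ≠ j := by
      intro h; rw [h] at hij; omega
    have hfac : (x i - x j) * (x i + x j) ≠ 0 := by
      have hs := sub_ne_zero.mpr (hx1 i j hne)
      intro h; exact hs (by linear_combination h)
    have hd1 : x i - x j ≠ 0 := fun h => hfac (by rw [h]; ring)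
    have hd2 : x i + x j ≠ 0 := fun h => hfac (by rw [h]; ring)
    have hd3 : x j - x i ≠ 0 := fun h => hd1 (by linear_combination -h)
    have hd4 : x j + x i ≠ 0 := fun h => hd2 (by linear_combination h)
    unfold cplus
    set S := Finset.univ.filter (fun p : Fin n × Fin n => p.1 < p.2) with hS
    set G : Fin n × Fin n → ℂ := fun p =>
      ((t - x p.1 + x p.2) * (t - x p.1 - x p.2)) / ((x p.2 + x p.1) * (x p.2 - x p.1))
      with hG
    have hDL : (∏ j', ∏ k ∈ Finset.Ioi j',
        ((t - (x ∘ Equiv.swap i j) j' + (x ∘ Equiv.swap i j) k)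
          * (t - (x ∘ Equiv.swap i j) j' - (x ∘ Equiv.swap i j) k))
        / (((x ∘ Equiv.swap i j) k + (x ∘ Equiv.swap i j) j')
          * ((x ∘ Equiv.swap i j) k - (x ∘ Equiv.swap i j) j')))
        = ∏ p ∈ S, G ((Equiv.prodCongr (Equiv.swap i j) (Equiv.swap i j)) p) := by
      rw [prod_Ioi_filter]
      rfl
    have hmap : ∏ p ∈ S, G ((Equiv.prodCongr (Equiv.swap i j) (Equiv.swap i j)) p)
        = ∏ p ∈ S.map (Equiv.prodCongr (Equiv.swap i j) (Equiv.swap i j)).toEmbedding, G p := by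
      rw [Finset.prod_map]
      rfl
    have hij_mem : (i, j) ∈ S := by
      simp only [hS, Finset.mem_filter, Finset.mem_univ, true_and, Fin.lt_def]
      omega
    have hji_not : (j, i) ∉ S.erase (i, j) := by
      simp only [hS, Finset.mem_erase, Finset.mem_filter, Finset.mem_univ, true_and, Fin.lt_def,
        not_and]
      intro _ h
      omega
    have hDL2 : (∏ p ∈ S, G ((Equiv.prodCongr (Equiv.swap i j) (Equiv.swap i j)) p))
        = G (j, i) * ∏ p ∈ S.erase (i, j), G p := by
      rw [hmap, swap_filter_map n i j hij, Finset.prod_insert hji_not]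
    have hDR : (∏ p ∈ S, G p) = G (i, j) * ∏ p ∈ S.erase (i, j), G p :=
      (Finset.mul_prod_erase S G hij_mem).symm
    have hSingle : (∏ j', ((a - (x ∘ Equiv.swap i j) j') * (b - (x ∘ Equiv.swap i j) j'))
          / (-2 * (x ∘ Equiv.swap i j) j'))
        = ∏ j', ((a - x j') * (b - x j')) / (-2 * x j') :=
      Equiv.prod_comp (Equiv.swap i j) (fun k => ((a - x k) * (b - x k)) / (-2 * x k))
    rw [hDL, hDL2, hSingle, prod_Ioi_filter n (fun j' k =>
      ((t - x j' + x k) * (t - x j' - x k)) / ((x k + x j') * (x k - x j')))]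
    have hSrw : (∏ p ∈ Finset.univ.filter (fun p : Fin n × Fin n => p.1 < p.2),
        ((t - x p.1 + x p.2) * (t - x p.1 - x p.2)) / ((x p.2 + x p.1) * (x p.2 - x p.1)))
        = ∏ p ∈ S, G p := rfl
    rw [hSrw, hDR]
    have key : G (j, i) = G (i, j) * ((t + x i - x j) / (x i - x j))
        / ((t - x i + x j) / (x j - x i)) := by
      simp only [hG]
      rw [div_mul_div_comm, div_div_div_eq]
      rw [div_eq_div_iff (by exact mul_ne_zero hd2 hd1)
        (mul_ne_zero (mul_ne_zero (mul_ne_zero hd4 hd3) hd1) ht)]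
      ring
    rw [key]
    ring
  · -- last simple root
    intro hab
    set m : Fin n := ⟨n - 1, by omega⟩ with hm
    set x' := Function.update x m (-(x m)) with hx'
    have hx'm : x' m = -(x m) := Function.update_self m _ x
    have hx'ne : ∀ k : Fin n, k ≠ m → x' k = x k := fun k hk =>
      Function.update_of_ne hk _ x
    have hlt : ∀ p : Fin n, p < m → p ≠ m := fun p hp => ne_of_lt hp
    unfold cplus
    have hD : (∏ j, ∏ k ∈ Finset.Ioi j,
        ((t - x' j + x' k) * (t - x' j - x' k)) / ((x' k + x' j) * (x' k - x' j)))
        = ∏ j, ∏ k ∈ Finset.Ioi j,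
        ((t - x j + x k) * (t - x j - x k)) / ((x k + x j) * (x k - x j)) := by
      apply Finset.prod_congr rfl
      intro p _
      apply Finset.prod_congr rfl
      intro k hk
      rw [Finset.mem_Ioi] at hk
      have hpm : p ≠ m := by
        intro h
        have h1 : (p : ℕ) < (k : ℕ) := hk
        have h2 : (k : ℕ) < n := k.isLt
        rw [h] at h1
        simp [hm] at h1
        omega
      rw [hx'ne p hpm]
      by_cases hkm : k = m
      · rw [hkm, hx'm]
        congr 1 <;> ring
      · rw [hx'ne k hkm]
    have hSL : (∏ j, ((a - x' j) * (b - x' j)) / (-2 * x' j))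
        = (((a - x' m) * (b - x' m)) / (-2 * x' m))
          * ∏ j ∈ Finset.univ.erase m, ((a - x j) * (b - x j)) / (-2 * x j) := by
      rw [← Finset.mul_prod_erase Finset.univ _ (Finset.mem_univ m)]
      congr 1
      apply Finset.prod_congr rfl
      intro k hk
      rw [hx'ne k (Finset.mem_erase.mp hk).1]
    have hSR : (∏ j, ((a - x j) * (b - x j)) / (-2 * x j))
        = (((a - x m) * (b - x m)) / (-2 * x m))
          * ∏ j ∈ Finset.univ.erase m, ((a - x j) * (b - x j)) / (-2 * x j) :=
      (Finset.mul_prod_erase Finset.univ _ (Finset.mem_univ m)).symm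
    rw [hD, hSL, hSR, hx'm]
    have hxm : x m ≠ 0 := hx0 m
    have key : ((a - -(x m)) * (b - -(x m))) / (-2 * -(x m))
        = (((a - x m) * (b - x m)) / (-2 * x m))
          * ((a + x m) * (b + x m) / (2 * x m))
          / ((a - x m) * (b - x m) / (-2 * x m)) := by
      have ha : a - x m ≠ 0 := left_ne_zero_of_mul hab
      have hb : b - x m ≠ 0 := right_ne_zero_of_mul hab
      field_simp
      ring
    rw [key]
    ring
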